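/- If f is a gl(M,N)-Young tableau of shape Y^λ for a hook partition λ, then for every 1 ≤ k ≤ M+N, the set of boxes f^{-1}({1,...,k}) ⊆ Y^λ is itself a gl(M_k,N_k)-Young diagram, and the restriction of f to this subset is a gl(M_k,N_k)-Young tableau of that shape. -/

import Mathlib

def rowLen (Y : Finset (ℕ × ℕ)) (i : ℕ) : ℕ := (Y.filter (fun p => p.1 = i)).card

def IsHook (M N : ℕ) (l : ℕ → ℕ) : Prop :=
  l 0 = 0 ∧ (∀ i, M + N < i → l i = 0) ∧
  (∀ i, 1 ≤ i → i < M + N → i ≠ M → l (i + 1) ≤ l i) ∧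
  (∀ j, 1 ≤ j → j ≤ N → 0 < l (M + j) → j ≤ l M)

def Ydiag (M N : ℕ) (l : ℕ → ℕ) : Finset (ℕ × ℕ) :=
  ((Finset.Icc 1 (M + N + (Finset.range (M + N + 1)).sup l)) ×ˢ
    (Finset.Icc 1 (N + (Finset.range (M + N + 1)).sup l))).filter
    (fun p => (p.1 ≤ M ∧ p.2 ≤ l p.1) ∨ (M < p.1 ∧ p.2 ≤ N ∧ p.1 - M ≤ l (M + p.2)))

def IsGlYD (M N : ℕ) (Y : Finset (ℕ × ℕ)) : Prop :=
  (∀ p ∈ Y, 1 ≤ p.1 ∧ 1 ≤ p.2) ∧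
  (∀ i j, (i, j + 1) ∈ Y → 1 ≤ j → (i, j) ∈ Y) ∧
  (∀ i, 1 ≤ i → rowLen Y (i + 1) ≤ rowLen Y i) ∧
  rowLen Y (M + 1) ≤ N

def IsTabOn (a b : ℕ) (Y : Finset (ℕ × ℕ)) (f : ℕ × ℕ → ℕ) : Prop :=
  (∀ p ∈ Y, 1 ≤ f p ∧ f p ≤ a + b) ∧
  (∀ p q, p ∈ Y → q ∈ Y → p.1 ≤ q.1 → p.2 ≤ q.2 → f p ≤ f q) ∧
  (∀ i j, (i, j) ∈ Y → (i + 1, j) ∈ Y → f (i, j) ≤ a → f (i, j) < f (i + 1, j)) ∧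
  (∀ i j, (i, j) ∈ Y → (i, j + 1) ∈ Y → a + 1 ≤ f (i, j) → f (i, j) < f (i, j + 1))

def Mk (M k : ℕ) : ℕ := min k M
def Nk (M k : ℕ) : ℕ := k - M

lemma mem_Ydiag {M N : ℕ} {lam : ℕ → ℕ} {i j : ℕ} :
    (i, j) ∈ Ydiag M N lam ↔
      (1 ≤ i ∧ i ≤ M + N + (Finset.range (M + N + 1)).sup lam) ∧
      (1 ≤ j ∧ j ≤ N + (Finset.range (M + N + 1)).sup lam) ∧
      ((i ≤ M ∧ j ≤ lam i) ∨ (M < i ∧ j ≤ N ∧ i - M ≤ lam (M + j))) := by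
  simp [Ydiag, Finset.mem_filter, Finset.mem_product, Finset.mem_Icc, and_assoc]

lemma Ydiag_row_closed {M N : ℕ} (hM : 0 < M) {lam : ℕ → ℕ} (hlam : IsHook M N lam)
    {i j : ℕ} (hj : 1 ≤ j) (h : (i, j + 1) ∈ Ydiag M N lam) : (i, j) ∈ Ydiag M N lam := by
  obtain ⟨h0, htop, hdec, hhook⟩ := hlam
  rw [mem_Ydiag] at h ⊢
  obtain ⟨hi, hjb, hpred⟩ := h
  refine ⟨hi, ⟨hj, by omega⟩, ?_⟩
  rcases hpred with ⟨h1, h2⟩ | ⟨h1, h2, h3⟩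
  · exact Or.inl ⟨h1, by omega⟩
  · refine Or.inr ⟨h1, by omega, ?_⟩
    have : lam (M + (j + 1)) ≤ lam (M + j) := by
      have := hdec (M + j) (by omega) (by omega) (by omega)
      simpa [Nat.add_assoc] using this
    omega

lemma Ydiag_col_closed {M N : ℕ} (hM : 0 < M) {lam : ℕ → ℕ} (hlam : IsHook M N lam)
    {i j : ℕ} (hi : 1 ≤ i) (h : (i + 1, j) ∈ Ydiag M N lam) : (i, j) ∈ Ydiag M N lam := by
  obtain ⟨h0, htop, hdec, hhook⟩ := hlam
  rw [mem_Ydiag] at h ⊢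
  obtain ⟨hib, hjb, hpred⟩ := h
  refine ⟨⟨hi, by omega⟩, hjb, ?_⟩
  rcases hpred with ⟨h1, h2⟩ | ⟨h1, h2, h3⟩
  · refine Or.inl ⟨by omega, ?_⟩
    have := hdec i hi (by omega) (by omega)
    omega
  · rcases Nat.lt_or_ge M i with hMi | hMi
    · exact Or.inr ⟨hMi, h2, by omega⟩
    · -- i = M
      have hiM : i = M := by omega
      have hl : 0 < lam (M + j) := by omega
      have := hhook j hjb.1 h2 hl
      exact Or.inl ⟨by omega, by rw [hiM]; exact this⟩

lemma f_lower {M N : ℕ} (hM : 0 < M) {lam : ℕ → ℕ} (hlam : IsHook M N lam)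
    {f : ℕ × ℕ → ℕ} (hf : IsTabOn M N (Ydiag M N lam) f) :
    ∀ i j, i ≤ M + 1 → (i, j) ∈ Ydiag M N lam → i ≤ f (i, j) := by
  intro i
  induction i with
  | zero => intro j _ _; exact Nat.zero_le _
  | succ i ih =>
    intro j hiM hmem
    rcases Nat.eq_zero_or_pos i with h0 | hpos
    · subst h0
      exact (hf.1 _ hmem).1
    · have hmem' : (i, j) ∈ Ydiag M N lam := Ydiag_col_closed hM hlam hpos hmem
      have hle : i ≤ f (i, j) := ih j (by omega) hmem'
      rcases le_or_gt (f (i, j)) M with hc | hc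
      · have := hf.2.2.1 i j hmem' hmem hc
        omega
      · have := hf.2.1 (i, j) (i + 1, j) hmem' hmem (by omega) (le_refl _)
        omega

lemma row_strict {M N : ℕ} (hM : 0 < M) {lam : ℕ → ℕ} (hlam : IsHook M N lam)
    {f : ℕ × ℕ → ℕ} (hf : IsTabOn M N (Ydiag M N lam) f) :
    ∀ d j, 1 ≤ j → (M + 1, j) ∈ Ydiag M N lam → (M + 1, j + d + 1) ∈ Ydiag M N lam →
      f (M + 1, j) < f (M + 1, j + d + 1) := by
  intro d
  induction d with
  | zero =>
    intro j hj h1 h2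
    exact hf.2.2.2 (M + 1) j h1 (by simpa using h2)
      (f_lower hM hlam hf (M + 1) j (le_refl _) h1)
  | succ d ih =>
    intro j hj h1 h2
    have h2' : (M + 1, j + d + 1) ∈ Ydiag M N lam := by
      have heq : j + (d + 1) + 1 = (j + d + 1) + 1 := by omega
      rw [heq] at h2
      exact Ydiag_row_closed hM hlam (by omega) h2
    have step : f (M + 1, j + d + 1) < f (M + 1, j + d + 1 + 1) :=
      hf.2.2.2 (M + 1) (j + d + 1) h2'
        h2
        (f_lower hM hlam hf (M + 1) (j + d + 1) (le_refl _) h2')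
    have := ih j hj h1 h2'
    have heq : j + (d + 1) + 1 = j + d + 1 + 1 := by omega
    rw [heq]
    omega

/-- the boxes of a tableau with entries `≤ k` form a
`gl(M_k,N_k)`-Young diagram, on which the tableau restricts to a
`gl(M_k,N_k)`-Young tableau. -/
theorem tableau_restriction (M N : ℕ) (hM : 0 < M) (hN : 0 < N)
    (lam : ℕ → ℕ) (hlam : IsHook M N lam) (f : ℕ × ℕ → ℕ)
    (hf : IsTabOn M N (Ydiag M N lam) f) (k : ℕ) (hk1 : 1 ≤ k) (hk2 : k ≤ M + N) :
    IsGlYD (Mk M k) (Nk M k) ((Ydiag M N lam).filter (fun p => f p ≤ k)) ∧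
    IsTabOn (Mk M k) (Nk M k) ((Ydiag M N lam).filter (fun p => f p ≤ k)) f := by
  set Y := Ydiag M N lam with hY
  set Z := Y.filter (fun p => f p ≤ k) with hZ
  have hZY : ∀ p, p ∈ Z → p ∈ Y ∧ f p ≤ k := by
    intro p hp; exact Finset.mem_filter.mp hp
  have hmemZ : ∀ p, p ∈ Y → f p ≤ k → p ∈ Z := by
    intro p h1 h2; exact Finset.mem_filter.mpr ⟨h1, h2⟩
  have hcoord : ∀ p ∈ Z, 1 ≤ p.1 ∧ 1 ≤ p.2 := by
    intro p hp
    have := (hZY p hp).1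
    rw [show p = (p.1, p.2) from rfl, mem_Ydiag] at this
    exact ⟨this.1.1, this.2.1.1⟩
  -- row left-closedness of Z
  have hrowZ : ∀ i j, (i, j + 1) ∈ Z → 1 ≤ j → (i, j) ∈ Z := by
    intro i j hp hj
    obtain ⟨hY1, hfk⟩ := hZY _ hp
    have hY2 : (i, j) ∈ Y := Ydiag_row_closed hM hlam hj hY1
    refine hmemZ _ hY2 ?_
    have := hf.2.1 (i, j) (i, j + 1) hY2 hY1 (le_refl _) (by omega)
    omega
  -- column closedness of Z
  have hcolZ : ∀ i j, 1 ≤ i → (i + 1, j) ∈ Z → (i, j) ∈ Z := by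
    intro i j hi hp
    obtain ⟨hY1, hfk⟩ := hZY _ hp
    have hY2 : (i, j) ∈ Y := Ydiag_col_closed hM hlam hi hY1
    refine hmemZ _ hY2 ?_
    have := hf.2.1 (i, j) (i + 1, j) hY2 hY1 (by omega) (le_refl _)
    omega
  have hrowlen : ∀ i, 1 ≤ i → rowLen Z (i + 1) ≤ rowLen Z i := by
    intro i hi
    unfold rowLen
    apply Finset.card_le_card_of_injOn (fun p => (i, p.2))
    · intro p hp
      rw [Finset.mem_coe, Finset.mem_filter] at hp ⊢
      refine ⟨?_, rfl⟩
      have : ((i : ℕ) + 1, p.2) ∈ Z := by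
        rw [show ((i : ℕ) + 1, p.2) = p by ext <;> simp [hp.2]]
        exact hp.1
      exact hcolZ i p.2 hi this
    · intro p hp q hq h
      simp only [Finset.coe_filter, Set.mem_setOf_eq] at hp hq
      have h2 : p.2 = q.2 := by simpa [Prod.ext_iff] using h
      ext
      · rw [hp.2, hq.2]
      · exact h2
  -- the key bound on row Mk + 1
  have hbound : rowLen Z (Mk M k + 1) ≤ Nk M k := by
    rcases le_or_gt k M with hkM | hkM
    · -- Mk = k, row k+1 of Z is empty
      have hMk : Mk M k = k := by simp [Mk]; omega
      rw [hMk]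
      have : Z.filter (fun p => p.1 = k + 1) = ∅ := by
        rw [Finset.filter_eq_empty_iff]
        intro p hp hp1
        obtain ⟨hY1, hfk⟩ := hZY _ hp
        have : k + 1 ≤ f (k + 1, p.2) := by
          apply f_lower hM hlam hf (k + 1) p.2 (by omega)
          rw [show ((k : ℕ) + 1, p.2) = p by ext <;> simp [hp1]]
          exact hY1
        rw [show ((k : ℕ) + 1, p.2) = p by ext <;> simp [hp1]] at this
        omega
      unfold rowLen
      rw [this]
      simp
    · -- M < k : Mk = M, Nk = k - M
      have hMk : Mk M k = M := by simp [Mk]; omega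
      have hNk : Nk M k = k - M := rfl
      rw [hMk, hNk]
      unfold rowLen
      have : (Finset.Icc (M + 1) k).card = k - M := by
        rw [Nat.card_Icc]; omega
      rw [← this]
      apply Finset.card_le_card_of_injOn f
      · intro p hp
        rw [Finset.mem_coe, Finset.mem_filter] at hp
        obtain ⟨hY1, hfk⟩ := hZY _ hp.1
        rw [Finset.mem_coe, Finset.mem_Icc]
        refine ⟨?_, hfk⟩
        have := f_lower hM hlam hf (M + 1) p.2 (le_refl _)
          (by rw [show ((M : ℕ) + 1, p.2) = p by ext <;> simp [hp.2]]; exact hY1)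
        rw [show ((M : ℕ) + 1, p.2) = p by ext <;> simp [hp.2]] at this
        exact this
      · intro p hp q hq hfeq
        simp only [Finset.coe_filter, Set.mem_setOf_eq] at hp hq
        by_contra hne
        have hpq2 : p.2 ≠ q.2 := by
          intro h2; apply hne; ext
          · rw [hp.2, hq.2]
          · exact h2
        have hp' : p = (M + 1, p.2) := by ext <;> simp [hp.2]
        have hq' : q = (M + 1, q.2) := by ext <;> simp [hq.2]
        have hp1 : 1 ≤ p.2 := (hcoord p hp.1).2
        have hq1 : 1 ≤ q.2 := (hcoord q hq.1).2
        have hpY : (M + 1, p.2) ∈ Y := by rw [← hp']; exact (hZY p hp.1).1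
        have hqY : (M + 1, q.2) ∈ Y := by rw [← hq']; exact (hZY q hq.1).1
        rcases Nat.lt_or_ge p.2 q.2 with hlt | hge
        · have := row_strict hM hlam hf (q.2 - p.2 - 1) p.2 hp1 hpY
            (by rw [show p.2 + (q.2 - p.2 - 1) + 1 = q.2 by omega]; exact hqY)
          rw [show p.2 + (q.2 - p.2 - 1) + 1 = q.2 by omega] at this
          simp only [← hp', ← hq'] at this
          omega
        · have hlt' : q.2 < p.2 := by omega
          have := row_strict hM hlam hf (p.2 - q.2 - 1) q.2 hq1 hqY
            (by rw [show q.2 + (p.2 - q.2 - 1) + 1 = p.2 by omega]; exact hpY)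
          rw [show q.2 + (p.2 - q.2 - 1) + 1 = p.2 by omega] at this
          simp only [← hp', ← hq'] at this
          omega
  have hMkNk : Mk M k + Nk M k = k := by
    simp only [Mk, Nk]; omega
  refine ⟨⟨hcoord, hrowZ, hrowlen, hbound⟩, ?_, ?_, ?_, ?_⟩
  · intro p hp
    obtain ⟨hY1, hfk⟩ := hZY _ hp
    exact ⟨(hf.1 p hY1).1, by omega⟩
  · intro p q hp hq h1 h2
    exact hf.2.1 p q (hZY p hp).1 (hZY q hq).1 h1 h2
  · intro i j h1 h2 hle
    exact hf.2.2.1 i j (hZY _ h1).1 (hZY _ h2).1 (by simp only [Mk] at hle; omega)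
  · intro i j h1 h2 hge
    have hfk : f (i, j) ≤ k := (hZY _ h1).2
    have hMle : M + 1 ≤ f (i, j) := by
      simp only [Mk] at hge
      omega
    exact hf.2.2.2 i j (hZY _ h1).1 (hZY _ h2).1 hMle
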